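/- Let F be a field, a ∈ F an element of multiplicative order ℓ (a^ℓ = 1 and a^j ≠ 1 for all 0 < j < ℓ), s, t natural numbers with t < s, and x : Fin s → F such that the map (i,j) ↦ a^j · (x i) from Fin s × Fin ℓ to F is injective. Then the F-linear subspace of (Fin s → F) given by the range of the linear map sending a polynomial g of degree < t + 1 (i.e. g ∈ Polynomial.degreeLT F (t+1)) to the vector (g((x i)^ℓ))_{i ∈ Fin s} has dimension (finrank) exactly t + 1. In particular, the punctured invariant code of the quasi-cyclic evaluation code of dimension t·ℓ + 1 is a GRS code of length s = n/ℓ and dimension t + 1. -/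
import Mathlib


open Polynomial

/-- The punctured invariant code of the quasi-cyclic evaluation code of
dimension `t·ℓ + 1` is a GRS (evaluation) code of length `s = n/ℓ` and
dimension `t + 1`: the evaluation map on polynomials of degree `< t + 1` at the
points `(x i)^ℓ` has range of dimension exactly `t + 1`. -/
theorem invariant_code_finrank_homothety {F : Type*} [Field F] (a : F)
    (ℓ : ℕ) (hℓ : 0 < ℓ) (ha1 : a ^ ℓ = 1)
    (ha2 : ∀ j : ℕ, 0 < j → j < ℓ → a ^ j ≠ 1) (s t : ℕ) (hts : t < s)
    (x : Fin s → F)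
    (hinj : Function.Injective fun p : Fin s × Fin ℓ => a ^ (p.2 : ℕ) * x p.1) :
    Module.finrank F (LinearMap.range
      ((LinearMap.pi fun i : Fin s => Polynomial.leval (x i ^ ℓ)).comp
        (Polynomial.degreeLT F (t + 1)).subtype)) = t + 1 := by
  -- the points (x i)^ℓ are pairwise distinct
  have hx : Function.Injective fun i : Fin s => x i ^ ℓ := by
    intro i i' h
    simp only at h
    by_cases hxi' : x i' = 0
    · have hxi : x i = 0 := by
        have : x i ^ ℓ = 0 := by rw [h, hxi', zero_pow hℓ.ne']
        exact pow_eq_zero_iff hℓ.ne' |>.mp this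
      have := hinj (a₁ := (i, ⟨0, hℓ⟩)) (a₂ := (i', ⟨0, hℓ⟩)) (by simp [hxi, hxi'])
      exact (Prod.ext_iff.mp this).1
    · -- (x i / x i')^ℓ = 1, so x i / x i' = a^j for some j
      have hratio : (x i / x i') ^ ℓ = 1 := by
        rw [div_pow, h, div_self (pow_ne_zero _ hxi')]
      -- roots of X^ℓ - 1 are exactly a^j, j < ℓ
      have horder : orderOf a = ℓ := by
        have ha0 : a ≠ 0 := by
          intro h0; rw [h0, zero_pow hℓ.ne'] at ha1; exact one_ne_zero ha1.symm
        have : IsOfFinOrder a := isOfFinOrder_iff_pow_eq_one.mpr ⟨ℓ, hℓ, ha1⟩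
        have h1 : orderOf a ∣ ℓ := orderOf_dvd_of_pow_eq_one ha1
        rcases (Nat.lt_or_ge (orderOf a) ℓ) with hlt | hge
        · exfalso
          have hpos : 0 < orderOf a := this.orderOf_pos
          exact ha2 (orderOf a) hpos hlt (pow_orderOf_eq_one a)
        · exact le_antisymm (Nat.le_of_dvd hℓ h1) hge
      -- the subgroup generated by a has order ℓ; x i / x i' is an ℓ-th root of 1
      have ha0 : a ≠ 0 := by
        intro h0; rw [h0, zero_pow hℓ.ne'] at ha1; exact one_ne_zero ha1.symm
      -- polynomial X^ℓ - 1 has roots a^0, ..., a^(ℓ-1), all distinct, total ℓ,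
      -- and degree ℓ, so these are all the roots.
      set P : F[X] := X ^ ℓ - 1 with hP
      have hPne : P ≠ 0 := fun h0 => by
        simpa [hP, zero_pow hℓ.ne'] using congrArg (Polynomial.eval 0) h0
      have hroots : ∀ j : Fin ℓ, P.IsRoot (a ^ (j : ℕ)) := by
        intro j
        simp only [hP, Polynomial.IsRoot, Polynomial.eval_sub, Polynomial.eval_pow,
          Polynomial.eval_X, Polynomial.eval_one]
        rw [← pow_mul, mul_comm, pow_mul, ha1, one_pow, sub_self]
      have hxroot : P.IsRoot (x i / x i') := by
        simp [hP, Polynomial.IsRoot, hratio]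
      -- distinct powers
      have hpowinj : Function.Injective fun j : Fin ℓ => a ^ (j : ℕ) := by
        intro j j' hjj
        have := pow_injOn_Iio_orderOf (x := a) (by simp [horder, j.2]) (by simp [horder, j'.2]) hjj
        exact Fin.ext this
      -- the multiset of powers is in P.roots
      classical
      have hsub : (Finset.univ.image fun j : Fin ℓ => a ^ (j : ℕ)) ⊆ P.roots.toFinset := by
        intro y hy
        simp only [Finset.mem_image] at hy
        obtain ⟨j, _, rfl⟩ := hy
        rw [Multiset.mem_toFinset, Polynomial.mem_roots hPne]
        exact hroots j
      have hcard1 : (Finset.univ.image fun j : Fin ℓ => a ^ (j : ℕ)).card = ℓ := by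
        rw [Finset.card_image_of_injective _ hpowinj, Finset.card_univ, Fintype.card_fin]
      have hcard2 : P.roots.toFinset.card ≤ ℓ := by
        calc P.roots.toFinset.card ≤ Multiset.card P.roots := Multiset.toFinset_card_le _
          _ ≤ P.natDegree := Polynomial.card_roots' P
          _ ≤ ℓ := by
              have : P.natDegree = ℓ := by
                rw [hP, ← Polynomial.C_1]; exact Polynomial.natDegree_X_pow_sub_C
              omega
      have heq : (Finset.univ.image fun j : Fin ℓ => a ^ (j : ℕ)) = P.roots.toFinset :=
        Finset.eq_of_subset_of_card_le hsub (by omega)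
      have hmem : x i / x i' ∈ Finset.univ.image fun j : Fin ℓ => a ^ (j : ℕ) := by
        rw [heq, Multiset.mem_toFinset, Polynomial.mem_roots hPne]
        exact hxroot
      simp only [Finset.mem_image] at hmem
      obtain ⟨j, _, hj⟩ := hmem
      have : a ^ (j : ℕ) * x i' = a ^ ((⟨0, hℓ⟩ : Fin ℓ) : ℕ) * x i := by
        rw [hj, div_mul_cancel₀ _ hxi']
        simp
      have := hinj (a₁ := (i', j)) (a₂ := (i, ⟨0, hℓ⟩)) this
      exact ((Prod.ext_iff.mp this).1).symm
  -- the evaluation map is injective on degreeLT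
  have hker : Function.Injective
      ((LinearMap.pi fun i : Fin s => Polynomial.leval (x i ^ ℓ)).comp
        (Polynomial.degreeLT F (t + 1)).subtype) := by
    rw [← LinearMap.ker_eq_bot]
    rw [LinearMap.ker_eq_bot']
    rintro ⟨g, hg⟩ hgz
    have heval : ∀ i : Fin s, g.eval (x i ^ ℓ) = 0 := by
      intro i
      have := congrFun hgz i
      simpa using this
    have hdeg : g.natDegree < s := by
      rcases eq_or_ne g 0 with rfl | hg0
      · simpa using hts.trans_le' (Nat.zero_le t)
      · have := Polynomial.mem_degreeLT.mp hg
        have := Polynomial.natDegree_lt_iff_degree_lt (n := t + 1) hg0 |>.mpr this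
        omega
    have : g = 0 := Polynomial.eq_zero_of_natDegree_lt_card_of_eval_eq_zero g hx heval
      (by simpa using hdeg)
    exact Subtype.ext this
  rw [LinearMap.finrank_range_of_inj hker]
  have : Module.finrank F (Polynomial.degreeLT F (t + 1)) = t + 1 := by
    rw [(Polynomial.degreeLTEquiv F (t + 1)).finrank_eq]
    simp
  exact this
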